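/- With A_m, B_m, K₀ and w₀ defined as follows — A_m = −(2/(mπ)³)·((−1)^m − 1)·(e^{−mπ} − 1)/(e^{mπ} − e^{−mπ}), B_m = (2/(mπ)³)·((−1)^m − 1)·(e^{mπ} − 1)/(e^{mπ} − e^{−mπ}), K₀ = 28.4541538, and w₀(x,y) = K₀·[ −(1/4)(y²−y) − (1/4)(x²−x) + (1/2)∑_{m=1}^{∞} sin(mπx)(A_m e^{mπy} + B_m e^{−mπy}) + (1/2)∑_{m=1}^{∞} sin(mπy)(A_m e^{mπx} + B_m e^{−mπx}) ] — the series defining w₀ converge at every point of the closed unit square, and w₀(x,y) = 0 for every (x,y) on the boundary of [0,1]×[0,1] (i.e. whenever x ∈ {0,1} or y ∈ {0,1}). -/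

import Mathlib

open Real

/-- Fourier coefficient `A_m`. -/
noncomputable def Acoef (m : ℕ) : ℝ :=
  -(2 / (m * π) ^ 3) * ((-1 : ℝ) ^ m - 1) *
    (Real.exp (-(m * π)) - 1) / (Real.exp (m * π) - Real.exp (-(m * π)))

/-- Fourier coefficient `B_m`. -/
noncomputable def Bcoef (m : ℕ) : ℝ :=
  (2 / (m * π) ^ 3) * ((-1 : ℝ) ^ m - 1) *
    (Real.exp (m * π) - 1) / (Real.exp (m * π) - Real.exp (-(m * π)))

/-- The constant `K₀`. -/
noncomputable def K₀ : ℝ := 28.4541538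

/-- `m`-th term of the first series: `sin(mπx)(A_m e^{mπy} + B_m e^{−mπy})`. -/
noncomputable def term1 (m : ℕ) (q : ℝ × ℝ) : ℝ :=
  Real.sin (m * π * q.1) *
    (Acoef m * Real.exp (m * π * q.2) + Bcoef m * Real.exp (-(m * π * q.2)))

/-- `m`-th term of the second series: `sin(mπy)(A_m e^{mπx} + B_m e^{−mπx})`. -/
noncomputable def term2 (m : ℕ) (q : ℝ × ℝ) : ℝ :=
  Real.sin (m * π * q.2) *
    (Acoef m * Real.exp (m * π * q.1) + Bcoef m * Real.exp (-(m * π * q.1)))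

/-- The duct Poiseuille profile `w₀`. -/
noncomputable def w₀ (q : ℝ × ℝ) : ℝ :=
  K₀ * (-(1 / 4) * (q.2 ^ 2 - q.2) - (1 / 4) * (q.1 ^ 2 - q.1) +
    (1 / 2) * ∑' m : ℕ, term1 (m + 1) q + (1 / 2) * ∑' m : ℕ, term2 (m + 1) q)

lemma Dpos (m : ℕ) :
    0 < Real.exp (((m + 1 : ℕ) : ℝ) * π) - Real.exp (-(((m + 1 : ℕ) : ℝ) * π)) := by
  have hπ : (0:ℝ) < ((m + 1 : ℕ) : ℝ) * π := by positivity
  have : Real.exp (-(((m + 1 : ℕ) : ℝ) * π)) < Real.exp (((m + 1 : ℕ) : ℝ) * π) :=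
    Real.exp_lt_exp.mpr (by linarith)
  linarith

lemma AB0 (m : ℕ) : Acoef (m + 1) + Bcoef (m + 1)
    = 2 / (((m + 1 : ℕ) : ℝ) * π) ^ 3 * ((-1 : ℝ) ^ (m + 1) - 1) := by
  rw [Acoef, Bcoef, ← add_div, div_eq_iff (Dpos m).ne']
  push_cast
  ring

lemma AB1 (m : ℕ) : Acoef (m + 1) * Real.exp (((m + 1 : ℕ) : ℝ) * π)
    + Bcoef (m + 1) * Real.exp (-(((m + 1 : ℕ) : ℝ) * π))
    = 2 / (((m + 1 : ℕ) : ℝ) * π) ^ 3 * ((-1 : ℝ) ^ (m + 1) - 1) := by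
  rw [Acoef, Bcoef, div_mul_eq_mul_div, div_mul_eq_mul_div, ← add_div,
    div_eq_iff (Dpos m).ne']
  push_cast
  ring

lemma eval_map_bern3 (x : ℝ) :
    (Polynomial.map (algebraMap ℚ ℝ) (Polynomial.bernoulli 3)).eval x
      = x ^ 3 - 3 / 2 * x ^ 2 + 1 / 2 * x := by
  rw [Polynomial.eval_map]
  simp_rw [Polynomial.bernoulli, Polynomial.eval₂_finset_sum, Finset.sum_range_succ,
    Finset.sum_range_zero, Polynomial.eval₂_monomial]
  rw [bernoulli_one, bernoulli_eq_bernoulli'_of_ne_one zero_ne_one, bernoulli'_zero,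
    bernoulli_eq_bernoulli'_of_ne_one (by decide : 2 ≠ 1), bernoulli'_two,
    bernoulli_eq_bernoulli'_of_ne_one (by decide : 3 ≠ 1), bernoulli'_three]
  norm_num
  ring

lemma cos_nat_pi (n : ℕ) : Real.cos ((n : ℝ) * π) = (-1 : ℝ) ^ n := by
  have := Real.cos_nat_mul_pi_sub 0 n
  simpa using this

/-- The key Fourier sine-series identity. -/
lemma hasSum_key (t : ℝ) (ht : t ∈ Set.Icc (0:ℝ) 1) :
    HasSum (fun m : ℕ => Real.sin (((m + 1 : ℕ) : ℝ) * π * t) *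
      (2 / (((m + 1 : ℕ) : ℝ) * π) ^ 3 * ((-1 : ℝ) ^ (m + 1) - 1))) ((t ^ 2 - t) / 2) := by
  obtain ⟨ht0, ht1⟩ := ht
  have hu : t / 2 ∈ Set.Icc (0:ℝ) 1 := ⟨by linarith, by linarith⟩
  have hu2 : t / 2 + 1 / 2 ∈ Set.Icc (0:ℝ) 1 := ⟨by linarith, by linarith⟩
  have H1 := hasSum_one_div_nat_pow_mul_sin (k := 1) one_ne_zero hu2
  have H2 := hasSum_one_div_nat_pow_mul_sin (k := 1) one_ne_zero hu
  have H := (H1.sub H2).mul_left (2 / π ^ 3)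
  set g : ℕ → ℝ := fun n => Real.sin ((n : ℝ) * π * t) *
      (2 / ((n : ℝ) * π) ^ 3 * ((-1 : ℝ) ^ n - 1)) with hgdef
  have H' : HasSum g ((t ^ 2 - t) / 2) := by
    convert H using 1
    · rfl
    · funext n
      rcases eq_or_ne n 0 with rfl | hn
      · simp [hgdef]
      · have hc : Real.sin (2 * π * (n : ℝ) * (t / 2 + 1 / 2))
            = (-1 : ℝ) ^ n * Real.sin (2 * π * (n : ℝ) * (t / 2)) := by
          rw [show 2 * π * (n : ℝ) * (t / 2 + 1 / 2)
              = 2 * π * (n : ℝ) * (t / 2) + (n : ℝ) * π by ring,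
            Real.sin_add, Real.sin_nat_mul_pi, cos_nat_pi]
          ring
        have hn' : ((n : ℝ)) ≠ 0 := Nat.cast_ne_zero.mpr hn
        rw [hgdef]
        simp only
        rw [hc, show (n : ℝ) * π * t = 2 * π * (n : ℝ) * (t / 2) by ring]
        field_simp
        ring
    · rw [eval_map_bern3, eval_map_bern3]
      have hπ : (π : ℝ) ≠ 0 := Real.pi_ne_zero
      norm_num [Nat.factorial]
      field_simp
      ring
  have h0 : g 0 = 0 := by simp [hgdef]
  have := (hasSum_nat_add_iff (f := g) 1).mpr (by simpa [h0] using H')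
  exact this

/-- tsum of a boundary series. -/
lemma tsum_edge (s t : ℝ) (ht : t ∈ Set.Icc (0:ℝ) 1) (hs : s = 0 ∨ s = 1) :
    ∑' m : ℕ, Real.sin (((m + 1 : ℕ) : ℝ) * π * t) *
      (Acoef (m + 1) * Real.exp (((m + 1 : ℕ) : ℝ) * π * s)
        + Bcoef (m + 1) * Real.exp (-(((m + 1 : ℕ) : ℝ) * π * s)))
      = (t ^ 2 - t) / 2 := by
  refine HasSum.tsum_eq ?_
  have h := hasSum_key t ht
  convert h using 1
  funext m
  rcases hs with rfl | rfl
  · rw [mul_zero, neg_zero, Real.exp_zero, mul_one, mul_one, AB0]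
  · rw [mul_one, AB1]

lemma coef_bound (m : ℕ) (s : ℝ) (hs : s ∈ Set.Icc (0:ℝ) 1) :
    |Acoef (m + 1) * Real.exp (((m + 1 : ℕ) : ℝ) * π * s)
      + Bcoef (m + 1) * Real.exp (-(((m + 1 : ℕ) : ℝ) * π * s))|
      ≤ 16 / ((m : ℝ) + 1) ^ 2 := by
  obtain ⟨hs0, hs1⟩ := hs
  set a : ℝ := ((m + 1 : ℕ) : ℝ) * π with ha
  have hn1 : (1:ℝ) ≤ ((m + 1 : ℕ) : ℝ) := by exact_mod_cast Nat.one_le_iff_ne_zero.mpr (by omega)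
  have hπ3 : (3:ℝ) < π := by linarith [Real.pi_gt_three]
  have ha3 : 3 < a := by
    calc (3:ℝ) < π := hπ3
    _ ≤ ((m + 1 : ℕ) : ℝ) * π := by nlinarith
  have hE1 : 4 ≤ Real.exp a := by nlinarith [Real.add_one_le_exp a]
  have hF1 : Real.exp (-a) ≤ 1 := by
    rw [← Real.exp_zero]; exact Real.exp_le_exp.mpr (by linarith)
  have hF0 : 0 < Real.exp (-a) := Real.exp_pos _
  have hD : 0 < Real.exp a - Real.exp (-a) := Dpos m
  have hED : Real.exp a / (Real.exp a - Real.exp (-a)) ≤ 2 := by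
    rw [div_le_iff₀ hD]; linarith
  have hv : |(-1 : ℝ) ^ (m + 1) - 1| ≤ 2 := by
    rcases Nat.even_or_odd (m + 1) with h | h
    · rw [h.neg_one_pow]; norm_num
    · rw [h.neg_one_pow]; norm_num
  have hapos : 0 < a := by linarith
  -- bound on |Acoef|·exp(a s)
  have hA : |Acoef (m + 1)| * Real.exp (a * s) ≤ 8 / a ^ 3 := by
    have h1 : |Acoef (m + 1)| ≤ (2 / a ^ 3 * 2 * 1) / (Real.exp a - Real.exp (-a)) := by
      rw [Acoef, ← ha, abs_div, abs_of_pos hD]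
      gcongr
      rw [abs_mul, abs_mul, abs_neg, abs_of_pos (by positivity : (0:ℝ) < 2 / a ^ 3)]
      gcongr <;> first
        | exact hv
        | (rw [abs_le]; constructor <;> nlinarith)
    have h2 : Real.exp (a * s) ≤ Real.exp a := Real.exp_le_exp.mpr (by nlinarith)
    calc |Acoef (m + 1)| * Real.exp (a * s)
        ≤ (2 / a ^ 3 * 2 * 1) / (Real.exp a - Real.exp (-a)) * Real.exp a := by
          gcongr
      _ = 4 / a ^ 3 * (Real.exp a / (Real.exp a - Real.exp (-a))) := by ring
      _ ≤ 4 / a ^ 3 * 2 := by gcongr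
      _ = 8 / a ^ 3 := by ring
  have hB : |Bcoef (m + 1)| * Real.exp (-(a * s)) ≤ 8 / a ^ 3 := by
    have h1 : |Bcoef (m + 1)| ≤ (2 / a ^ 3 * 2 * Real.exp a) / (Real.exp a - Real.exp (-a)) := by
      rw [Bcoef, ← ha, abs_div, abs_of_pos hD]
      gcongr
      rw [abs_mul, abs_mul, abs_of_pos (by positivity : (0:ℝ) < 2 / a ^ 3)]
      gcongr <;> first
        | exact hv
        | (rw [abs_le]; constructor <;> nlinarith)
    have h2 : Real.exp (-(a * s)) ≤ 1 := by
      rw [← Real.exp_zero]; exact Real.exp_le_exp.mpr (by nlinarith)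
    calc |Bcoef (m + 1)| * Real.exp (-(a * s))
        ≤ (2 / a ^ 3 * 2 * Real.exp a) / (Real.exp a - Real.exp (-a)) * 1 := by
          gcongr
      _ = 4 / a ^ 3 * (Real.exp a / (Real.exp a - Real.exp (-a))) := by ring
      _ ≤ 4 / a ^ 3 * 2 := by gcongr
      _ = 8 / a ^ 3 := by ring
  have htot : |Acoef (m + 1) * Real.exp (a * s) + Bcoef (m + 1) * Real.exp (-(a * s))|
      ≤ 16 / a ^ 3 := by
    calc |Acoef (m + 1) * Real.exp (a * s) + Bcoef (m + 1) * Real.exp (-(a * s))|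
        ≤ |Acoef (m + 1) * Real.exp (a * s)| + |Bcoef (m + 1) * Real.exp (-(a * s))| :=
          abs_add_le _ _
      _ = |Acoef (m + 1)| * Real.exp (a * s) + |Bcoef (m + 1)| * Real.exp (-(a * s)) := by
          rw [abs_mul, abs_mul, abs_of_pos (Real.exp_pos _), abs_of_pos (Real.exp_pos _)]
      _ ≤ 8 / a ^ 3 + 8 / a ^ 3 := add_le_add hA hB
      _ = 16 / a ^ 3 := by ring
  have hfin : 16 / a ^ 3 ≤ 16 / ((m : ℝ) + 1) ^ 2 := by
    have hcast : ((m + 1 : ℕ) : ℝ) = (m : ℝ) + 1 := by push_cast; ring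
    have hmn : (0:ℝ) < (m : ℝ) + 1 := by positivity
    apply div_le_div_of_nonneg_left (by norm_num) (by positivity)
    rw [ha, hcast]
    have h1 : ((m:ℝ) + 1) ^ 2 ≤ ((m:ℝ) + 1) ^ 3 := by nlinarith
    have h2 : (27:ℝ) ≤ π ^ 3 := by nlinarith [sq_nonneg (π - 3), Real.pi_pos]
    have h3 : ((m:ℝ) + 1) ^ 3 * 27 ≤ ((m:ℝ) + 1) ^ 3 * π ^ 3 :=
      mul_le_mul_of_nonneg_left h2 (by positivity)
    nlinarith [h1, h3, pow_nonneg hmn.le 3]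
  exact le_trans htot hfin

lemma summable_aux : Summable (fun m : ℕ => 16 / ((m : ℝ) + 1) ^ 2) := by
  have h : Summable (fun n : ℕ => 1 / ((n : ℝ)) ^ 2) :=
    Real.summable_one_div_nat_pow.mpr one_lt_two
  have h2 : Summable (fun n : ℕ => 1 / (((n + 1 : ℕ) : ℝ)) ^ 2) :=
    h.comp_injective (add_left_injective 1)
  have h3 : Summable (fun n : ℕ => 1 / ((n : ℝ) + 1) ^ 2) := by
    refine h2.congr fun n => ?_
    push_cast; ring
  simpa [div_eq_mul_inv, mul_comm] using h3.mul_left 16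


/-- the two series defining `w₀` converge at every point of the closed
unit square, and `w₀` vanishes on the boundary of `[0,1]×[0,1]` (the no-slip
condition on the duct wall). -/
theorem w0_boundary_zero :
    (∀ x y : ℝ, x ∈ Set.Icc (0 : ℝ) 1 → y ∈ Set.Icc (0 : ℝ) 1 →
      Summable (fun m : ℕ => term1 (m + 1) (x, y)) ∧
      Summable (fun m : ℕ => term2 (m + 1) (x, y))) ∧
    (∀ x y : ℝ, x ∈ Set.Icc (0 : ℝ) 1 → y ∈ Set.Icc (0 : ℝ) 1 →
      (x = 0 ∨ x = 1 ∨ y = 0 ∨ y = 1) → w₀ (x, y) = 0) := by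
  have hsummable : ∀ (u v : ℝ), v ∈ Set.Icc (0:ℝ) 1 →
      Summable (fun m : ℕ => Real.sin (((m + 1 : ℕ) : ℝ) * π * u) *
        (Acoef (m + 1) * Real.exp (((m + 1 : ℕ) : ℝ) * π * v)
          + Bcoef (m + 1) * Real.exp (-(((m + 1 : ℕ) : ℝ) * π * v)))) := by
    intro u v hv
    apply Summable.of_norm_bounded summable_aux
    intro m
    rw [Real.norm_eq_abs, abs_mul]
    calc |Real.sin (((m + 1 : ℕ) : ℝ) * π * u)| *
          |Acoef (m + 1) * Real.exp (((m + 1 : ℕ) : ℝ) * π * v)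
            + Bcoef (m + 1) * Real.exp (-(((m + 1 : ℕ) : ℝ) * π * v))|
        ≤ 1 * (16 / ((m : ℝ) + 1) ^ 2) := by
          apply mul_le_mul (Real.abs_sin_le_one _) (coef_bound m v hv) (abs_nonneg _)
          norm_num
      _ = 16 / ((m : ℝ) + 1) ^ 2 := one_mul _
  constructor
  · intro x y hx hy
    exact ⟨hsummable x y hy, hsummable y x hx⟩
  · intro x y hx hy h
    have hzero1 : ∀ t s : ℝ, (t = 0 ∨ t = 1) →
        ∑' m : ℕ, term1 (m + 1) (t, s) = 0 := by
      intro t s ht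
      have hz : ∀ m : ℕ, term1 (m + 1) (t, s) = 0 := by
        intro m
        rcases ht with rfl | rfl
        · simp [term1]
        · have hs := Real.sin_nat_mul_pi (m + 1)
          push_cast at hs
          simp [term1, hs]
      rw [tsum_congr hz, tsum_zero]
    rcases h with rfl | rfl | rfl | rfl
    · have h1 : ∑' m : ℕ, term1 (m + 1) ((0:ℝ), y) = 0 := hzero1 0 y (Or.inl rfl)
      have h2 : ∑' m : ℕ, term2 (m + 1) ((0:ℝ), y) = (y ^ 2 - y) / 2 := by
        simp only [term2]
        exact tsum_edge 0 y hy (Or.inl rfl)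
      show K₀ * (-(1 / 4) * (y ^ 2 - y) - (1 / 4) * ((0:ℝ) ^ 2 - 0) +
        (1 / 2) * ∑' m : ℕ, term1 (m + 1) ((0:ℝ), y) +
        (1 / 2) * ∑' m : ℕ, term2 (m + 1) ((0:ℝ), y)) = 0
      rw [h1, h2]; ring
    · have h1 : ∑' m : ℕ, term1 (m + 1) ((1:ℝ), y) = 0 := hzero1 1 y (Or.inr rfl)
      have h2 : ∑' m : ℕ, term2 (m + 1) ((1:ℝ), y) = (y ^ 2 - y) / 2 := by
        simp only [term2]
        exact tsum_edge 1 y hy (Or.inr rfl)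
      show K₀ * (-(1 / 4) * (y ^ 2 - y) - (1 / 4) * ((1:ℝ) ^ 2 - 1) +
        (1 / 2) * ∑' m : ℕ, term1 (m + 1) ((1:ℝ), y) +
        (1 / 2) * ∑' m : ℕ, term2 (m + 1) ((1:ℝ), y)) = 0
      rw [h1, h2]; ring
    · have h1 : ∑' m : ℕ, term2 (m + 1) (x, (0:ℝ)) = 0 := by
        have hz : ∀ m : ℕ, term2 (m + 1) (x, (0:ℝ)) = 0 := fun m => by simp [term2]
        rw [tsum_congr hz, tsum_zero]
      have h2 : ∑' m : ℕ, term1 (m + 1) (x, (0:ℝ)) = (x ^ 2 - x) / 2 := by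
        simp only [term1]
        exact tsum_edge 0 x hx (Or.inl rfl)
      show K₀ * (-(1 / 4) * ((0:ℝ) ^ 2 - 0) - (1 / 4) * (x ^ 2 - x) +
        (1 / 2) * ∑' m : ℕ, term1 (m + 1) (x, (0:ℝ)) +
        (1 / 2) * ∑' m : ℕ, term2 (m + 1) (x, (0:ℝ))) = 0
      rw [h1, h2]; ring
    · have h1 : ∑' m : ℕ, term2 (m + 1) (x, (1:ℝ)) = 0 := by
        have hz : ∀ m : ℕ, term2 (m + 1) (x, (1:ℝ)) = 0 := fun m => by
          have hs := Real.sin_nat_mul_pi (m + 1)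
          push_cast at hs
          simp [term2, hs]
        rw [tsum_congr hz, tsum_zero]
      have h2 : ∑' m : ℕ, term1 (m + 1) (x, (1:ℝ)) = (x ^ 2 - x) / 2 := by
        simp only [term1]
        exact tsum_edge 1 x hx (Or.inr rfl)
      show K₀ * (-(1 / 4) * ((1:ℝ) ^ 2 - 1) - (1 / 4) * (x ^ 2 - x) +
        (1 / 2) * ∑' m : ℕ, term1 (m + 1) (x, (1:ℝ)) +
        (1 / 2) * ∑' m : ℕ, term2 (m + 1) (x, (1:ℝ))) = 0
      rw [h1, h2]; ring
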